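/- For every nonzero real number a and every (x,y) ∈ ℝ², the map L̃ of Theorem 7.1 satisfies b(L̃(x,y), ∂L̃/∂x(x,y)) = 0 and b(L̃(x,y), ∂L̃/∂y(x,y)) = 0 (as complex numbers); that is, L̃ is a horizontal map with respect to the Hopf fibration π : H⁵₂(−1) → CH²₁(−4). -/

import Mathlib

open Complex

/-- The index-two Hermitian form
`b(z,w) = −conj z₁ · w₁ − conj z₂ · w₂ + conj z₃ · w₃` on `ℂ³`, over which the
pseudo-hyperbolic space `H⁵₂(−1) = {z : b(z,z) = −1}` and the Hopf fibration
`π : H⁵₂(−1) → CH²₁(−4)` are defined. -/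
noncomputable def bHyp (z w : ℂ × ℂ × ℂ) : ℂ :=
  -(starRingEnd ℂ z.1) * w.1 - (starRingEnd ℂ z.2.1) * w.2.1
    + (starRingEnd ℂ z.2.2) * w.2.2

/-- The horizontal lift `L̃ : ℝ² → ℂ³` of Theorem 7.1. -/
noncomputable def Lch (a x y : ℝ) : ℂ × ℂ × ℂ :=
  ((1 / Real.sqrt 3 : ℝ) : ℂ) •
    (((Real.sqrt 2 : ℝ) : ℂ) * Complex.exp (-(Complex.I * ((x + a ^ 2 * y : ℝ) : ℂ)) / (2 * (a : ℂ)))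
        * ((Real.cosh (Real.sqrt 3 * (x - a ^ 2 * y) / (2 * a)) : ℝ) : ℂ),
     Complex.exp (Complex.I * ((a * y + x / a : ℝ) : ℂ)),
     ((Real.sqrt 2 : ℝ) : ℂ) * Complex.exp (-(Complex.I * ((x + a ^ 2 * y : ℝ) : ℂ)) / (2 * (a : ℂ)))
        * ((Real.sinh (Real.sqrt 3 * (x - a ^ 2 * y) / (2 * a)) : ℝ) : ℂ))

/-- Theorem 7.1: `L̃` is horizontal with respect to the Hopf fibration
`π : H⁵₂(−1) → CH²₁(−4)`: each partial derivative is `b`-orthogonal over `ℂ`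
to the position vector. -/
theorem Lch_horizontal (a : ℝ) (ha : a ≠ 0) :
    ∀ x y : ℝ,
      bHyp (Lch a x y) (deriv (fun t => Lch a t y) x) = 0 ∧
      bHyp (Lch a x y) (deriv (fun t => Lch a x t) y) = 0 := by
  intro x y
  have hCS : Complex.cosh (((Real.sqrt 3 : ℝ) : ℂ) * (((x : ℂ)) - ((a : ℂ)) ^ 2 * (y : ℂ)) / (2 * (a : ℂ))) ^ 2
      - Complex.sinh (((Real.sqrt 3 : ℝ) : ℂ) * (((x : ℂ)) - ((a : ℂ)) ^ 2 * (y : ℂ)) / (2 * (a : ℂ))) ^ 2 = 1 :=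
    Complex.cosh_sq_sub_sinh_sq _
  have h2 : ((Real.sqrt 2 : ℝ) : ℂ) ^ 2 = 2 := by
    rw [← Complex.ofReal_pow, Real.sq_sqrt (by norm_num : (0:ℝ) ≤ 2)]
    norm_num
  have hE1 : (starRingEnd ℂ) (Complex.exp (-(Complex.I * ((x : ℂ) + (a : ℂ) ^ 2 * (y : ℂ))) / (2 * (a : ℂ))))
      * Complex.exp (-(Complex.I * ((x : ℂ) + (a : ℂ) ^ 2 * (y : ℂ))) / (2 * (a : ℂ))) = 1 := by
    rw [← Complex.exp_conj, ← Complex.exp_add,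
      show (starRingEnd ℂ) (-(Complex.I * ((x : ℂ) + (a : ℂ) ^ 2 * (y : ℂ))) / (2 * (a : ℂ)))
          + -(Complex.I * ((x : ℂ) + (a : ℂ) ^ 2 * (y : ℂ))) / (2 * (a : ℂ)) = 0 by
        simp only [map_div₀, map_neg, map_mul, map_add, map_pow, map_ofNat,
          Complex.conj_I, Complex.conj_ofReal]
        ring]
    exact Complex.exp_zero
  have hF1 : (starRingEnd ℂ) (Complex.exp (Complex.I * ((a : ℂ) * (y : ℂ) + (x : ℂ) / (a : ℂ))))
      * Complex.exp (Complex.I * ((a : ℂ) * (y : ℂ) + (x : ℂ) / (a : ℂ))) = 1 := by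
    rw [← Complex.exp_conj, ← Complex.exp_add,
      show (starRingEnd ℂ) (Complex.I * ((a : ℂ) * (y : ℂ) + (x : ℂ) / (a : ℂ)))
          + Complex.I * ((a : ℂ) * (y : ℂ) + (x : ℂ) / (a : ℂ)) = 0 by
        simp only [map_div₀, map_neg, map_mul, map_add, map_pow, map_ofNat,
          Complex.conj_I, Complex.conj_ofReal]
        ring]
    exact Complex.exp_zero
  constructor
  · -- x-derivative
    have hc1 : HasDerivAt (fun t : ℝ => ((t + a ^ 2 * y : ℝ) : ℂ)) ((1:ℝ):ℂ) x :=
      ((hasDerivAt_id x).add_const (a ^ 2 * y)).ofReal_comp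
    have hE : HasDerivAt
        (fun t : ℝ => Complex.exp (-(Complex.I * ((t + a ^ 2 * y : ℝ) : ℂ)) / (2 * (a : ℂ))))
        (Complex.exp (-(Complex.I * ((x + a ^ 2 * y : ℝ) : ℂ)) / (2 * (a : ℂ)))
          * (-(Complex.I * ((1:ℝ):ℂ)) / (2 * (a : ℂ)))) x :=
      ((hc1.const_mul Complex.I).neg.div_const (2 * (a:ℂ))).cexp
    have hu : HasDerivAt (fun t : ℝ => Real.sqrt 3 * (t - a ^ 2 * y) / (2 * a))
        (Real.sqrt 3 * 1 / (2 * a)) x :=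
      (((hasDerivAt_id x).sub_const _).const_mul _).div_const _
    have hC : HasDerivAt (fun t : ℝ => ((Real.cosh (Real.sqrt 3 * (t - a ^ 2 * y) / (2 * a)) : ℝ) : ℂ))
        ((Real.sinh (Real.sqrt 3 * (x - a ^ 2 * y) / (2 * a)) * (Real.sqrt 3 * 1 / (2 * a)) : ℝ) : ℂ) x :=
      (hu.cosh).ofReal_comp
    have hS : HasDerivAt (fun t : ℝ => ((Real.sinh (Real.sqrt 3 * (t - a ^ 2 * y) / (2 * a)) : ℝ) : ℂ))
        ((Real.cosh (Real.sqrt 3 * (x - a ^ 2 * y) / (2 * a)) * (Real.sqrt 3 * 1 / (2 * a)) : ℝ) : ℂ) x :=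
      (hu.sinh).ofReal_comp
    have hr2 : HasDerivAt (fun t : ℝ => ((a * y + t / a : ℝ) : ℂ)) ((1 / a : ℝ) : ℂ) x :=
      (((hasDerivAt_id x).div_const a).const_add (a * y)).ofReal_comp
    have hF : HasDerivAt (fun t : ℝ => Complex.exp (Complex.I * ((a * y + t / a : ℝ) : ℂ)))
        (Complex.exp (Complex.I * ((a * y + x / a : ℝ) : ℂ)) * (Complex.I * ((1 / a : ℝ) : ℂ))) x :=
      (hr2.const_mul Complex.I).cexp
    have h1 := ((hE.const_mul ((Real.sqrt 2 : ℝ) : ℂ)).mul hC)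
    have h3 := ((hE.const_mul ((Real.sqrt 2 : ℝ) : ℂ)).mul hS)
    have htot : HasDerivAt (fun t => Lch a t y) _ x :=
      (HasDerivAt.prodMk h1 (HasDerivAt.prodMk hF h3)).const_smul ((1 / Real.sqrt 3 : ℝ) : ℂ)
    rw [htot.deriv]
    simp only [bHyp, Lch, Prod.smul_mk, smul_eq_mul, Prod.fst, Prod.snd, map_mul,
      Complex.conj_ofReal]
    push_cast
    linear_combination
      (-(1 / ((Real.sqrt 3 : ℝ) : ℂ)) ^ 2 * ((Real.sqrt 2 : ℝ) : ℂ) ^ 2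
          * (-(Complex.I * 1) / (2 * (a : ℂ)))
          * (Complex.cosh (((Real.sqrt 3 : ℝ) : ℂ) * ((x : ℂ) - (a : ℂ) ^ 2 * (y : ℂ)) / (2 * (a : ℂ))) ^ 2
            - Complex.sinh (((Real.sqrt 3 : ℝ) : ℂ) * ((x : ℂ) - (a : ℂ) ^ 2 * (y : ℂ)) / (2 * (a : ℂ))) ^ 2)) * hE1
      + (-(1 / ((Real.sqrt 3 : ℝ) : ℂ)) ^ 2 * (Complex.I * (1 / (a : ℂ)))) * hF1
      + (-(1 / ((Real.sqrt 3 : ℝ) : ℂ)) ^ 2 * ((Real.sqrt 2 : ℝ) : ℂ) ^ 2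
          * (-(Complex.I * 1) / (2 * (a : ℂ)))) * hCS
      + (-(1 / ((Real.sqrt 3 : ℝ) : ℂ)) ^ 2 * (-(Complex.I * 1) / (2 * (a : ℂ)))) * h2
  · -- y-derivative
    have hc1 : HasDerivAt (fun t : ℝ => ((x + a ^ 2 * t : ℝ) : ℂ)) ((a ^ 2 * 1 : ℝ) : ℂ) y :=
      (((hasDerivAt_id y).const_mul (a ^ 2)).const_add x).ofReal_comp
    have hE : HasDerivAt
        (fun t : ℝ => Complex.exp (-(Complex.I * ((x + a ^ 2 * t : ℝ) : ℂ)) / (2 * (a : ℂ))))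
        (Complex.exp (-(Complex.I * ((x + a ^ 2 * y : ℝ) : ℂ)) / (2 * (a : ℂ)))
          * (-(Complex.I * ((a ^ 2 * 1 : ℝ) : ℂ)) / (2 * (a : ℂ)))) y :=
      ((hc1.const_mul Complex.I).neg.div_const (2 * (a:ℂ))).cexp
    have hu : HasDerivAt (fun t : ℝ => Real.sqrt 3 * (x - a ^ 2 * t) / (2 * a))
        (Real.sqrt 3 * (-(a ^ 2 * 1)) / (2 * a)) y :=
      ((((hasDerivAt_id y).const_mul (a ^ 2)).const_sub x).const_mul _).div_const _
    have hC : HasDerivAt (fun t : ℝ => ((Real.cosh (Real.sqrt 3 * (x - a ^ 2 * t) / (2 * a)) : ℝ) : ℂ))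
        ((Real.sinh (Real.sqrt 3 * (x - a ^ 2 * y) / (2 * a)) * (Real.sqrt 3 * (-(a ^ 2 * 1)) / (2 * a)) : ℝ) : ℂ) y :=
      (hu.cosh).ofReal_comp
    have hS : HasDerivAt (fun t : ℝ => ((Real.sinh (Real.sqrt 3 * (x - a ^ 2 * t) / (2 * a)) : ℝ) : ℂ))
        ((Real.cosh (Real.sqrt 3 * (x - a ^ 2 * y) / (2 * a)) * (Real.sqrt 3 * (-(a ^ 2 * 1)) / (2 * a)) : ℝ) : ℂ) y :=
      (hu.sinh).ofReal_comp
    have hr2 : HasDerivAt (fun t : ℝ => ((a * t + x / a : ℝ) : ℂ)) ((a * 1 : ℝ) : ℂ) y :=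
      (((hasDerivAt_id y).const_mul a).add_const (x / a)).ofReal_comp
    have hF : HasDerivAt (fun t : ℝ => Complex.exp (Complex.I * ((a * t + x / a : ℝ) : ℂ)))
        (Complex.exp (Complex.I * ((a * y + x / a : ℝ) : ℂ)) * (Complex.I * ((a * 1 : ℝ) : ℂ))) y :=
      (hr2.const_mul Complex.I).cexp
    have h1 := ((hE.const_mul ((Real.sqrt 2 : ℝ) : ℂ)).mul hC)
    have h3 := ((hE.const_mul ((Real.sqrt 2 : ℝ) : ℂ)).mul hS)
    have htot : HasDerivAt (fun t => Lch a x t) _ y :=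
      (HasDerivAt.prodMk h1 (HasDerivAt.prodMk hF h3)).const_smul ((1 / Real.sqrt 3 : ℝ) : ℂ)
    rw [htot.deriv]
    simp only [bHyp, Lch, Prod.smul_mk, smul_eq_mul, Prod.fst, Prod.snd, map_mul,
      Complex.conj_ofReal]
    push_cast
    have haInv : (a : ℂ) * ((a : ℂ))⁻¹ = 1 := mul_inv_cancel₀ (Complex.ofReal_ne_zero.mpr ha)
    linear_combination
      ((1 / ((Real.sqrt 3 : ℝ) : ℂ)) ^ 2 * Complex.I * (a : ℂ)) * haInv
      + (-(1 / ((Real.sqrt 3 : ℝ) : ℂ)) ^ 2 * ((Real.sqrt 2 : ℝ) : ℂ) ^ 2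
          * (-(Complex.I * ((a : ℂ) ^ 2 * 1)) / (2 * (a : ℂ)))
          * (Complex.cosh (((Real.sqrt 3 : ℝ) : ℂ) * ((x : ℂ) - (a : ℂ) ^ 2 * (y : ℂ)) / (2 * (a : ℂ))) ^ 2
            - Complex.sinh (((Real.sqrt 3 : ℝ) : ℂ) * ((x : ℂ) - (a : ℂ) ^ 2 * (y : ℂ)) / (2 * (a : ℂ))) ^ 2)) * hE1
      + (-(1 / ((Real.sqrt 3 : ℝ) : ℂ)) ^ 2 * (Complex.I * ((a : ℂ) * 1))) * hF1
      + (-(1 / ((Real.sqrt 3 : ℝ) : ℂ)) ^ 2 * ((Real.sqrt 2 : ℝ) : ℂ) ^ 2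
          * (-(Complex.I * ((a : ℂ) ^ 2 * 1)) / (2 * (a : ℂ)))) * hCS
      + (-(1 / ((Real.sqrt 3 : ℝ) : ℂ)) ^ 2 * (-(Complex.I * ((a : ℂ) ^ 2 * 1)) / (2 * (a : ℂ)))) * h2
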